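/- For t ≥ 14, the set {α + 2β : (α, β) ∈ ℕ², 3α + 5β + 2 = t} is an interval of consecutive integers (i.e., if m and M are its minimum and maximum, every integer in [m, M] is attained). -/
import Mathlib


/-- For `t ≥ 14`, the set `{α + 2β : α, β ∈ ℕ, 3α + 5β + 2 = t}` is an interval of
consecutive integers: every integer between its minimum and its maximum is attained. -/
theorem values_form_interval (t : ℕ) (ht : 14 ≤ t) (m M : ℕ)
    (hm : IsLeast {n : ℕ | ∃ α β : ℕ, 3 * α + 5 * β + 2 = t ∧ n = α + 2 * β} m)
    (hM : IsGreatest {n : ℕ | ∃ α β : ℕ, 3 * α + 5 * β + 2 = t ∧ n = α + 2 * β} M) :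
    ∀ n : ℕ, m ≤ n → n ≤ M →
      n ∈ {n : ℕ | ∃ α β : ℕ, 3 * α + 5 * β + 2 = t ∧ n = α + 2 * β} := by
  intro n hmn hnM
  induction n with
  | zero =>
    have := hm.1
    obtain ⟨α, β, h1, h2⟩ := this
    interval_cases m
    · exact hm.1
    all_goals omega
  | succ k ih =>
    rcases Nat.lt_or_ge m (k + 1) with hlt | hge
    · -- m ≤ k, so k ∈ S; step up
      have hk : k ∈ {n : ℕ | ∃ α β : ℕ, 3 * α + 5 * β + 2 = t ∧ n = α + 2 * β} :=
        ih (by omega) (by omega)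
      obtain ⟨α, β, h1, h2⟩ := hk
      by_cases hα : 5 ≤ α
      · exact ⟨α - 5, β + 3, by omega, by omega⟩
      · -- α ≤ 4 : then k is the maximum, contradicting k+1 ≤ M
        exfalso
        obtain ⟨α', β', hM1, hM2⟩ := hM.1
        omega
    · -- m = k+1
      have : m = k + 1 := by omega
      exact this ▸ hm.1
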